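/- Let φ: [1,∞) → (0,∞) be a fundamental function with φ(1) = 1. Then there is a Banach space X with a normalized 1-unconditional Schauder basis (e_i) whose fundamental function agrees with φ on ℕ, i.e., sup_{|A|≤n} ‖Σ_{i∈A} e_i‖ = φ(n) for all n ∈ ℕ. (Concretely, the completion of c_00 under ‖x‖ = max{ ‖x‖_{ℓ∞}, sup_{A∈𝓕} (φ(|A|)/|A|) Σ_{i∈A} |x_i| }, for any family 𝓕 of finite subsets of ℕ containing a set of each cardinality, works with the unit vectors as basis.) -/

import Mathlib

open scoped BigOperators

section CommonDefs

variable {X : Type*} [NormedAddCommGroup X] [NormedSpace ℝ X]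

/-- `(e, coord)` is a Schauder basis of `X` with biorthogonal functionals `coord`:
the functionals are biorthogonal to the basis vectors and every `x` is the limit of the
partial sums of its expansion `Σ coord i x • e i`. -/
structure IsSchauderBasis (e : ℕ → X) (coord : ℕ → X →L[ℝ] ℝ) : Prop where
  biorth : ∀ i j, coord i (e j) = if i = j then 1 else 0
  expansion : ∀ x : X,
    Filter.Tendsto (fun n => ∑ i ∈ Finset.range n, coord i x • e i)
      Filter.atTop (nhds x)

/-- The best `m`-term approximation error `σ_m(x)` w.r.t. the norm `nn`. -/
noncomputable def bestApprox (e : ℕ → X) (nn : X → ℝ) (m : ℕ) (x : X) : ℝ :=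
  sInf { r | ∃ (A : Finset ℕ) (a : ℕ → ℝ), A.card ≤ m ∧
    r = nn (x - ∑ i ∈ A, a i • e i) }

/-- `A` is a set of coordinates of `x` of largest modulus (a greedy set):
the `m`-th greedy approximant of `x` is `∑ i ∈ A, coord i x • e i` for a greedy set of
cardinality `m`. -/
def GreedySet (coord : ℕ → X →L[ℝ] ℝ) (x : X) (A : Finset ℕ) : Prop :=
  ∀ i ∈ A, ∀ j ∉ A, |coord j x| ≤ |coord i x|

/-- The basis `(e, coord)` is `C`-greedy w.r.t. the norm `nn`:
`‖x - G_m(x)‖ ≤ C σ_m(x)` for every `x` and `m` (for any choice of `m`-th greedy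
approximant `G_m(x)`). -/
def IsGreedyWith (e : ℕ → X) (coord : ℕ → X →L[ℝ] ℝ) (nn : X → ℝ) (C : ℝ) : Prop :=
  ∀ (x : X) (m : ℕ) (A : Finset ℕ), A.card = m → GreedySet coord x A →
    nn (x - ∑ i ∈ A, coord i x • e i) ≤ C * bestApprox e nn m x

/-- Suppression `K`-unconditionality w.r.t. the norm `nn`. -/
def IsSuppressionUnconditionalWith (e : ℕ → X) (nn : X → ℝ) (K : ℝ) : Prop :=
  ∀ (s A : Finset ℕ) (a : ℕ → ℝ), A ⊆ s →
    nn (∑ i ∈ A, a i • e i) ≤ K * nn (∑ i ∈ s, a i • e i)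

/-- `K`-unconditionality w.r.t. the norm `nn`. -/
def IsUnconditionalWith (e : ℕ → X) (nn : X → ℝ) (K : ℝ) : Prop :=
  ∀ (s : Finset ℕ) (a b : ℕ → ℝ), (∀ i, |a i| ≤ |b i|) →
    nn (∑ i ∈ s, a i • e i) ≤ K * nn (∑ i ∈ s, b i • e i)

/-- `Δ`-democracy w.r.t. the norm `nn`. -/
def IsDemocraticWith (e : ℕ → X) (nn : X → ℝ) (Δ : ℝ) : Prop :=
  ∀ A B : Finset ℕ, A.card ≤ B.card →
    nn (∑ i ∈ A, e i) ≤ Δ * nn (∑ i ∈ B, e i)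

/-- The basis is normalized w.r.t. the norm `nn`. -/
def IsNormalizedWith (e : ℕ → X) (nn : X → ℝ) : Prop :=
  ∀ i, nn (e i) = 1

/-- The basis is seminormalized. -/
def IsSeminormalized (e : ℕ → X) : Prop :=
  ∃ c C : ℝ, 0 < c ∧ ∀ i, c ≤ ‖e i‖ ∧ ‖e i‖ ≤ C

/-- The fundamental function `φ(n) = sup_{|A| ≤ n} ‖Σ_{i∈A} e_i‖` w.r.t. the norm `nn`. -/
noncomputable def fundFn (e : ℕ → X) (nn : X → ℝ) (n : ℕ) : ℝ :=
  sSup { r | ∃ A : Finset ℕ, A.card ≤ n ∧ r = nn (∑ i ∈ A, e i) }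

/-- The dual norm (w.r.t. `nn`) of `∑_{i∈A} e_i^*`. -/
noncomputable def dualNormFinset (coord : ℕ → X →L[ℝ] ℝ) (nn : X → ℝ) (A : Finset ℕ) : ℝ :=
  sSup { r | ∃ x : X, nn x ≤ 1 ∧ r = |∑ i ∈ A, coord i x| }

/-- The dual fundamental function `φ*(n) = sup_{|A| ≤ n} ‖Σ_{i∈A} e_i^*‖*` w.r.t. `nn`. -/
noncomputable def dualFundFn (coord : ℕ → X →L[ℝ] ℝ) (nn : X → ℝ) (n : ℕ) : ℝ :=
  sSup { r | ∃ A : Finset ℕ, A.card ≤ n ∧ r = dualNormFinset coord nn A }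

/-- `Δ`-bidemocracy w.r.t. the norm `nn`: `φ(n) φ*(n) ≤ Δ n` for all `n`. -/
def IsBidemocraticWith (e : ℕ → X) (coord : ℕ → X →L[ℝ] ℝ) (nn : X → ℝ) (Δ : ℝ) : Prop :=
  ∀ n : ℕ, fundFn e nn n * dualFundFn coord nn n ≤ Δ * n

/-- `nn` is a norm on `X` equivalent to the original norm. -/
def IsEquivNorm (nn : X → ℝ) : Prop :=
  (∀ x y : X, nn (x + y) ≤ nn x + nn y) ∧
  (∀ (a : ℝ) (x : X), nn (a • x) = |a| * nn x) ∧
  ∃ c C : ℝ, 0 < c ∧ ∀ x : X, c * ‖x‖ ≤ nn x ∧ nn x ≤ C * ‖x‖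

/-- The (finitely supported) vector `Σ_i f i • e i` with coefficients `f ∈ c₀₀`. -/
noncomputable def finVec (e : ℕ → X) (f : ℕ →₀ ℝ) : X :=
  f.sum fun i c => c • e i

/-- `y = w + t` is a greedy rearrangement of `x = w + u`: the coefficient sequences
`w, u, t` have pairwise disjoint supports, `|supp u| = |supp t|`, and
`‖w‖_∞ ≤ |u_i| = |t_j|` for all `i ∈ supp u`, `j ∈ supp t`. -/
def IsGreedyRearrangement (w u t : ℕ →₀ ℝ) : Prop :=
  Disjoint w.support u.support ∧ Disjoint w.support t.support ∧
  Disjoint u.support t.support ∧ u.support.card = t.support.card ∧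
  (∀ i ∈ u.support, ∀ j ∈ t.support, |u i| = |t j|) ∧
  (∀ n : ℕ, ∀ i ∈ u.support, |w n| ≤ |u i|)

end CommonDefs

section FundDefs

/-- A fundamental (quasi-concave) function on `[1, ∞)`: positive, increasing, and
`x ↦ φ(x)/x` is decreasing. -/
def IsFundamentalFunction (φ : ℝ → ℝ) : Prop :=
  (∀ x : ℝ, 1 ≤ x → 0 < φ x) ∧
  (∀ x y : ℝ, 1 ≤ x → x ≤ y → φ x ≤ φ y) ∧
  (∀ x y : ℝ, 1 ≤ x → x ≤ y → φ y / y ≤ φ x / x)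

/-- `δ_φ(y) = liminf_{x→∞} φ(yx)/(y φ(x))`. -/
noncomputable def deltaFn (φ : ℝ → ℝ) (y : ℝ) : ℝ :=
  Filter.liminf (fun x : ℝ => φ (y * x) / (y * φ x)) Filter.atTop

/-- `δ(φ) = inf_{y ≥ 1} δ_φ(y)`. -/
noncomputable def deltaParam (φ : ℝ → ℝ) : ℝ :=
  sInf { d | ∃ y : ℝ, 1 ≤ y ∧ d = deltaFn φ y }

/-- Equivalence of fundamental functions. -/
def FundEquiv (φ ψ : ℝ → ℝ) : Prop :=
  ∃ a b : ℝ, 0 < a ∧ 0 < b ∧ ∀ x : ℝ, 1 ≤ x → a * φ x ≤ ψ x ∧ ψ x ≤ b * φ x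

end FundDefs

namespace FundFnConstruction

/-- The seminorm associated to a finite set `A`:
`x ↦ (φ(|A|)/|A|) ∑_{i∈A} |x_i|`. -/
noncomputable def gfun (φ : ℝ → ℝ) (x : ℕ →₀ ℝ) (A : Finset ℕ) : ℝ :=
  (φ A.card / A.card) * ∑ i ∈ A, |x i|

/-- The Marcinkiewicz-type norm. -/
noncomputable def Nφ (φ : ℝ → ℝ) (x : ℕ →₀ ℝ) : ℝ :=
  sSup (Set.range (gfun φ x))

variable {φ : ℝ → ℝ}

lemma ratio_nonneg (hφ : IsFundamentalFunction φ) (k : ℕ) : 0 ≤ φ k / k := by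
  rcases Nat.eq_zero_or_pos k with h | h
  · simp [h]
  · have h1 : (1 : ℝ) ≤ k := by exact_mod_cast h
    have h2 := hφ.1 k h1
    positivity

lemma ratio_le_one (hφ : IsFundamentalFunction φ) (hφ1 : φ 1 = 1) {k : ℕ} (hk : 1 ≤ k) :
    φ k / k ≤ 1 := by
  have h1 : (1 : ℝ) ≤ k := by exact_mod_cast hk
  have := hφ.2.2 1 k le_rfl h1
  simpa [hφ1] using this

lemma sum_abs_le (x : ℕ →₀ ℝ) (A : Finset ℕ) :
    ∑ i ∈ A, |x i| ≤ ∑ i ∈ x.support, |x i| := by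
  have h1 : ∑ i ∈ A, |x i| = ∑ i ∈ A ∩ x.support, |x i| := by
    refine (Finset.sum_subset Finset.inter_subset_left ?_).symm
    intro i hi hi'
    have hns : i ∉ x.support := fun h => hi' (Finset.mem_inter.2 ⟨hi, h⟩)
    simp [Finsupp.notMem_support_iff.1 hns]
  rw [h1]
  exact Finset.sum_le_sum_of_subset_of_nonneg Finset.inter_subset_right
    (fun i _ _ => abs_nonneg _)

lemma gfun_le (hφ : IsFundamentalFunction φ) (hφ1 : φ 1 = 1) (x : ℕ →₀ ℝ) (A : Finset ℕ) :
    gfun φ x A ≤ ∑ i ∈ x.support, |x i| := by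
  rcases Nat.eq_zero_or_pos A.card with h | h
  · rw [Finset.card_eq_zero.1 h]
    simp only [gfun, Finset.sum_empty, mul_zero]
    exact Finset.sum_nonneg fun i _ => abs_nonneg _
  · calc gfun φ x A ≤ 1 * ∑ i ∈ A, |x i| := by
          exact mul_le_mul_of_nonneg_right (ratio_le_one hφ hφ1 h)
            (Finset.sum_nonneg fun i _ => abs_nonneg _)
    _ = ∑ i ∈ A, |x i| := one_mul _
    _ ≤ ∑ i ∈ x.support, |x i| := sum_abs_le x A

lemma bddAbove_gfun (hφ : IsFundamentalFunction φ) (hφ1 : φ 1 = 1) (x : ℕ →₀ ℝ) :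
    BddAbove (Set.range (gfun φ x)) := by
  refine ⟨∑ i ∈ x.support, |x i|, ?_⟩
  rintro r ⟨A, rfl⟩
  exact gfun_le hφ hφ1 x A

lemma gfun_le_N (hφ : IsFundamentalFunction φ) (hφ1 : φ 1 = 1) (x : ℕ →₀ ℝ) (A : Finset ℕ) :
    gfun φ x A ≤ Nφ φ x :=
  le_csSup (bddAbove_gfun hφ hφ1 x) ⟨A, rfl⟩

lemma apply_le_N (hφ : IsFundamentalFunction φ) (hφ1 : φ 1 = 1) (x : ℕ →₀ ℝ) (i : ℕ) :
    |x i| ≤ Nφ φ x := by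
  have h := gfun_le_N hφ hφ1 x {i}
  simpa [gfun, hφ1] using h

lemma N_nonneg (hφ : IsFundamentalFunction φ) (hφ1 : φ 1 = 1) (x : ℕ →₀ ℝ) :
    0 ≤ Nφ φ x := by
  have h := gfun_le_N hφ hφ1 x ∅
  simpa [gfun] using h

lemma N_mono (hφ : IsFundamentalFunction φ) (hφ1 : φ 1 = 1) {x y : ℕ →₀ ℝ}
    (h : ∀ i, |x i| ≤ |y i|) : Nφ φ x ≤ Nφ φ y := by
  refine csSup_le ⟨_, ⟨∅, rfl⟩⟩ ?_
  rintro r ⟨A, rfl⟩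
  calc gfun φ x A ≤ gfun φ y A :=
        mul_le_mul_of_nonneg_left (Finset.sum_le_sum fun i _ => h i) (ratio_nonneg hφ A.card)
  _ ≤ Nφ φ y := gfun_le_N hφ hφ1 y A

lemma N_zero (hφ : IsFundamentalFunction φ) (hφ1 : φ 1 = 1) : Nφ φ 0 = 0 := by
  refine le_antisymm ?_ (N_nonneg hφ hφ1 0)
  refine csSup_le ⟨_, ⟨∅, rfl⟩⟩ ?_
  rintro r ⟨A, rfl⟩
  simp [gfun]

lemma N_add (hφ : IsFundamentalFunction φ) (hφ1 : φ 1 = 1) (x y : ℕ →₀ ℝ) :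
    Nφ φ (x + y) ≤ Nφ φ x + Nφ φ y := by
  refine csSup_le ⟨_, ⟨∅, rfl⟩⟩ ?_
  rintro r ⟨A, rfl⟩
  have h1 : gfun φ (x + y) A ≤ gfun φ x A + gfun φ y A := by
    rw [gfun, gfun, gfun, ← mul_add, ← Finset.sum_add_distrib]
    refine mul_le_mul_of_nonneg_left ?_ (ratio_nonneg hφ A.card)
    refine Finset.sum_le_sum fun i _ => ?_
    rw [Finsupp.add_apply]
    exact abs_add_le _ _
  exact h1.trans (add_le_add (gfun_le_N hφ hφ1 x A) (gfun_le_N hφ hφ1 y A))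

lemma N_neg (hφ : IsFundamentalFunction φ) (hφ1 : φ 1 = 1) (x : ℕ →₀ ℝ) :
    Nφ φ (-x) = Nφ φ x := by
  refine le_antisymm (N_mono hφ hφ1 fun i => ?_) (N_mono hφ hφ1 fun i => ?_) <;> simp

lemma N_smul_le (hφ : IsFundamentalFunction φ) (hφ1 : φ 1 = 1) (a : ℝ) (x : ℕ →₀ ℝ) :
    Nφ φ (a • x) ≤ |a| * Nφ φ x := by
  refine csSup_le ⟨_, ⟨∅, rfl⟩⟩ ?_
  rintro r ⟨A, rfl⟩
  have h1 : gfun φ (a • x) A = |a| * gfun φ x A := by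
    simp only [gfun, Finsupp.smul_apply, smul_eq_mul, abs_mul, ← Finset.mul_sum]
    ring
  rw [h1]
  exact mul_le_mul_of_nonneg_left (gfun_le_N hφ hφ1 x A) (abs_nonneg a)

lemma N_smul (hφ : IsFundamentalFunction φ) (hφ1 : φ 1 = 1) (a : ℝ) (x : ℕ →₀ ℝ) :
    Nφ φ (a • x) = |a| * Nφ φ x := by
  rcases eq_or_ne a 0 with rfl | ha
  · simp [N_zero hφ hφ1]
  · refine le_antisymm (N_smul_le hφ hφ1 a x) ?_
    have h2 : Nφ φ x ≤ |a|⁻¹ * Nφ φ (a • x) := by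
      have h3 := N_smul_le hφ hφ1 a⁻¹ (a • x)
      rwa [inv_smul_smul₀ ha, abs_inv] at h3
    calc |a| * Nφ φ x ≤ |a| * (|a|⁻¹ * Nφ φ (a • x)) :=
          mul_le_mul_of_nonneg_left h2 (abs_nonneg a)
    _ = Nφ φ (a • x) := by
        rw [← mul_assoc, mul_inv_cancel₀ (abs_ne_zero.2 ha), one_mul]

lemma N_eq_zero (hφ : IsFundamentalFunction φ) (hφ1 : φ 1 = 1) {x : ℕ →₀ ℝ}
    (h : Nφ φ x = 0) : x = 0 := by
  ext i
  have h1 := apply_le_N hφ hφ1 x i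
  rw [h] at h1
  simpa using abs_eq_zero.1 (le_antisymm h1 (abs_nonneg _))

/-- The finitely supported vector with coordinates `a i` on `s` and `0` elsewhere. -/
noncomputable def vec (s : Finset ℕ) (a : ℕ → ℝ) : ℕ →₀ ℝ :=
  ∑ i ∈ s, a i • Finsupp.single i 1

lemma vec_apply (s : Finset ℕ) (a : ℕ → ℝ) (j : ℕ) :
    vec s a j = if j ∈ s then a j else 0 := by
  classical
  rw [vec, Finsupp.finset_sum_apply]
  have h1 : ∀ i, (a i • Finsupp.single i (1 : ℝ)) j = if i = j then a i else 0 := by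
    intro i
    rw [Finsupp.smul_apply, Finsupp.single_apply]
    by_cases h : i = j <;> simp [h]
  simp only [h1]
  rw [Finset.sum_ite_eq' s j a]

/-- The norm of the indicator vector of a nonempty finite set `B` is `φ(|B|)`. -/
lemma N_vec_one (hφ : IsFundamentalFunction φ) (hφ1 : φ 1 = 1) {B : Finset ℕ}
    (hB : B.Nonempty) : Nφ φ (vec B fun _ => 1) = φ B.card := by
  classical
  have hb : 1 ≤ B.card := hB.card_pos
  have hb1 : (1 : ℝ) ≤ (B.card : ℝ) := by exact_mod_cast hb
  have hsum : ∀ A : Finset ℕ, ∑ i ∈ A, |vec B (fun _ => 1) i| = ((A ∩ B).card : ℝ) := by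
    intro A
    have h2 : ∀ i, |vec B (fun _ => (1:ℝ)) i| = if i ∈ B then 1 else 0 := by
      intro i
      rw [vec_apply]
      by_cases h : i ∈ B <;> simp [h]
    simp only [h2]
    rw [Finset.sum_boole]
    simp [Finset.filter_mem_eq_inter]
  refine le_antisymm ?_ ?_
  · refine csSup_le ⟨_, ⟨∅, rfl⟩⟩ ?_
    rintro r ⟨A, rfl⟩
    rw [gfun, hsum A]
    rcases Nat.eq_zero_or_pos A.card with h | h
    · rw [Finset.card_eq_zero.1 h]
      simpa using le_of_lt (hφ.1 _ hb1)
    · have hk1 : (1 : ℝ) ≤ (A.card : ℝ) := by exact_mod_cast h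
      have hmk : ((A ∩ B).card : ℝ) ≤ (A.card : ℝ) := by
        exact_mod_cast Finset.card_le_card Finset.inter_subset_left
      have hmb : ((A ∩ B).card : ℝ) ≤ (B.card : ℝ) := by
        exact_mod_cast Finset.card_le_card Finset.inter_subset_right
      rcases le_or_gt A.card B.card with hkb | hbk
      · have hkb' : (A.card : ℝ) ≤ (B.card : ℝ) := by exact_mod_cast hkb
        calc φ A.card / A.card * ((A ∩ B).card : ℝ)
            ≤ φ A.card / A.card * (A.card : ℝ) :=
              mul_le_mul_of_nonneg_left hmk (ratio_nonneg hφ A.card)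
        _ = φ A.card := div_mul_cancel₀ _ (by positivity)
        _ ≤ φ B.card := hφ.2.1 _ _ hk1 hkb'
      · have hbk' : (B.card : ℝ) ≤ (A.card : ℝ) := by exact_mod_cast le_of_lt hbk
        calc φ A.card / A.card * ((A ∩ B).card : ℝ)
            ≤ φ B.card / B.card * ((A ∩ B).card : ℝ) :=
              mul_le_mul_of_nonneg_right (hφ.2.2 _ _ hb1 hbk')
                (by positivity)
        _ ≤ φ B.card / B.card * (B.card : ℝ) :=
              mul_le_mul_of_nonneg_left hmb (ratio_nonneg hφ B.card)
        _ = φ B.card := div_mul_cancel₀ _ (by positivity)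
  · refine le_csSup (bddAbove_gfun hφ hφ1 _) ⟨B, ?_⟩
    rw [gfun, hsum B, Finset.inter_self, div_mul_cancel₀ _ (by positivity : (B.card : ℝ) ≠ 0)]

/-- The normed group structure induced by the Marcinkiewicz-type norm. -/
@[reducible]
noncomputable def Mng (φ : ℝ → ℝ) (hφ : IsFundamentalFunction φ) (hφ1 : φ 1 = 1) :
    NormedAddCommGroup (ℕ →₀ ℝ) :=
  AddGroupNorm.toNormedAddCommGroup
    { toFun := Nφ φ
      map_zero' := N_zero hφ hφ1
      add_le' := N_add hφ hφ1
      neg' := N_neg hφ hφ1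
      eq_zero_of_map_eq_zero' := fun x h => N_eq_zero hφ hφ1 h }

end FundFnConstruction

/-- for every fundamental function `φ` with `φ(1) = 1` there is a Banach
space with a normalized `1`-unconditional Schauder basis whose fundamental function
agrees with `φ` on `ℕ`. -/
theorem exists_space_with_given_fundamental_function (φ : ℝ → ℝ)
    (hφ : IsFundamentalFunction φ) (hφ1 : φ 1 = 1) :
    ∃ (X : Type) (_ : NormedAddCommGroup X) (_ : NormedSpace ℝ X) (_ : CompleteSpace X)
      (e : ℕ → X) (coord : ℕ → X →L[ℝ] ℝ),
      IsSchauderBasis e coord ∧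
      IsNormalizedWith e (fun x => ‖x‖) ∧
      IsUnconditionalWith e (fun x => ‖x‖) 1 ∧
      ∀ n : ℕ, 1 ≤ n → fundFn e (fun x => ‖x‖) n = φ (n : ℝ) := by
  classical
  open FundFnConstruction UniformSpace in
  letI : NormedAddCommGroup (ℕ →₀ ℝ) := Mng φ hφ hφ1
  letI : NormedSpace ℝ (ℕ →₀ ℝ) :=
    { (inferInstance : Module ℝ (ℕ →₀ ℝ)) with
      norm_smul_le := fun a x => le_of_eq (by
        show Nφ φ (a • x) = ‖a‖ * Nφ φ x
        rw [Real.norm_eq_abs]; exact N_smul hφ hφ1 a x) }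
  have norm_def : ∀ x : ℕ →₀ ℝ, ‖x‖ = Nφ φ x := fun _ => rfl
  set X := Completion (ℕ →₀ ℝ) with hX
  -- the dense embedding
  have hdense : DenseRange (⇑(Completion.toComplL : (ℕ →₀ ℝ) →L[ℝ] X)) := by
    rw [Completion.coe_toComplL]; exact Completion.denseRange_coe
  have hui : IsUniformInducing (⇑(Completion.toComplL : (ℕ →₀ ℝ) →L[ℝ] X)) := by
    rw [Completion.coe_toComplL]; exact Completion.isUniformInducing_coe _
  have hcoe : ∀ y : ℕ →₀ ℝ, (Completion.toComplL : (ℕ →₀ ℝ) →L[ℝ] X) y = (y : X) := by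
    intro y; rw [Completion.coe_toComplL]
  -- coordinate functionals on c₀₀
  set ci : ℕ → (ℕ →₀ ℝ) →L[ℝ] ℝ := fun i =>
    LinearMap.mkContinuous (Finsupp.lapply i) 1 (fun x => by
      rw [norm_def, Real.norm_eq_abs, one_mul]
      exact apply_le_N hφ hφ1 x i) with hci
  have hci_apply : ∀ i (x : ℕ →₀ ℝ), ci i x = x i := fun i x => rfl
  -- basis vectors and coordinate functionals on X
  set e : ℕ → X := fun i => ((Finsupp.single i 1 : ℕ →₀ ℝ) : X) with he
  set coord : ℕ → X →L[ℝ] ℝ := fun i =>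
    ContinuousLinearMap.extend (ci i) Completion.toComplL with hcoord
  have hcoord_coe : ∀ i (y : ℕ →₀ ℝ), coord i (y : X) = y i := by
    intro i y
    have h1 := ContinuousLinearMap.extend_eq (ci i) hdense hui y
    rw [hcoe] at h1
    rw [hcoord]; rw [h1]; rfl
  -- the image of `vec s a` in X
  have hvec : ∀ (s : Finset ℕ) (a : ℕ → ℝ),
      ((vec s a : ℕ →₀ ℝ) : X) = ∑ i ∈ s, a i • e i := by
    intro s a
    rw [← hcoe, vec, map_sum]
    refine Finset.sum_congr rfl fun i _ => ?_
    rw [map_smul, hcoe]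
  have hnorm_coe : ∀ y : ℕ →₀ ℝ, ‖(y : X)‖ = Nφ φ y := by
    intro y; rw [Completion.norm_coe]; exact norm_def y
  -- norms of finite sums
  have hnorm_sum : ∀ (s : Finset ℕ) (a : ℕ → ℝ),
      ‖∑ i ∈ s, a i • e i‖ = Nφ φ (vec s a) := by
    intro s a; rw [← hvec]; exact hnorm_coe _
  -- single i 1 = vec {i} 1
  have hsingle : ∀ i : ℕ, (Finsupp.single i (1:ℝ)) = vec {i} (fun _ => 1) := by
    intro i; rw [vec, Finset.sum_singleton, one_smul]
  -- the partial sum projections, as continuous linear maps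
  set T : ℕ → X →L[ℝ] X := fun n =>
    ∑ i ∈ Finset.range n, (coord i).smulRight (e i) with hT
  have hT_apply : ∀ (n : ℕ) (x : X), T n x = ∑ i ∈ Finset.range n, coord i x • e i := by
    intro n x
    rw [hT]
    simp [ContinuousLinearMap.sum_apply, ContinuousLinearMap.smulRight_apply]
  have hT_coe : ∀ (n : ℕ) (y : ℕ →₀ ℝ),
      T n (y : X) = ((vec (Finset.range n) (fun i => y i) : ℕ →₀ ℝ) : X) := by
    intro n y
    rw [hT_apply, hvec]
    refine Finset.sum_congr rfl fun i _ => ?_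
    rw [hcoord_coe]
  have hT_norm : ∀ (n : ℕ) (x : X), ‖T n x‖ ≤ ‖x‖ := by
    intro n x
    refine Completion.induction_on x ?_ ?_
    · exact isClosed_le (continuous_norm.comp (T n).continuous) continuous_norm
    · intro y
      rw [hT_coe, hnorm_coe, hnorm_coe]
      refine N_mono hφ hφ1 fun j => ?_
      rw [vec_apply]
      by_cases h : j ∈ Finset.range n <;> simp [h, abs_nonneg]
  have hT_fix : ∀ (y : ℕ →₀ ℝ) (n : ℕ), y.support.sup id < n → T n (y : X) = (y : X) := by
    intro y n hn
    rw [hT_coe]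
    congr 1
    ext j
    rw [vec_apply]
    by_cases h : j ∈ Finset.range n
    · simp [h]
    · have hj : j ∉ y.support := by
        intro hj
        exact h (Finset.mem_range.2 (lt_of_le_of_lt (Finset.le_sup (f := id) hj) hn))
      simp [h, Finsupp.notMem_support_iff.1 hj]
  refine ⟨X, inferInstance, inferInstance, Completion.completeSpace _, e, coord, ?_, ?_, ?_, ?_⟩
  · constructor
    · -- biorthogonality
      intro i j
      rw [he, hcoord_coe, Finsupp.single_apply]
      simp [eq_comm]
    · -- expansion
      intro x
      have heq : ∀ n, ∑ i ∈ Finset.range n, coord i x • e i = T n x :=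
        fun n => (hT_apply n x).symm
      simp only [heq]
      rw [Metric.tendsto_atTop]
      intro ε hε
      obtain ⟨y, hy⟩ := Metric.denseRange_iff.1 Completion.denseRange_coe x (ε/2) (by linarith)
      refine ⟨y.support.sup id + 1, fun n hn => ?_⟩
      have hfix : T n (y : X) = (y : X) := hT_fix y n (by omega)
      have h1 : T n x - x = T n (x - (y : X)) + ((y : X) - x) := by
        rw [map_sub, hfix]; abel
      have h2 : dist (T n x) x = ‖T n x - x‖ := by
        rw [dist_eq_norm]
      rw [h2, h1]
      calc ‖T n (x - (y : X)) + ((y : X) - x)‖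
          ≤ ‖T n (x - (y : X))‖ + ‖(y : X) - x‖ := norm_add_le _ _
      _ ≤ ‖x - (y : X)‖ + ‖(y : X) - x‖ := by
          have := hT_norm n (x - (y : X)); linarith [norm_sub_rev (y : X) x,
            (by rw [norm_sub_rev] : ‖(y : X) - x‖ = ‖x - (y : X)‖)]
      _ = dist x (y : X) + dist x (y : X) := by
          rw [dist_eq_norm, norm_sub_rev]
      _ < ε := by linarith
  · -- normalized
    intro i
    have h := hnorm_sum {i} (fun _ => 1)
    rw [Finset.sum_singleton, one_smul] at h
    show ‖e i‖ = 1
    rw [h, N_vec_one hφ hφ1 (Finset.singleton_nonempty i)]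
    simpa using hφ1
  · -- 1-unconditional
    intro s a b hab
    show ‖∑ i ∈ s, a i • e i‖ ≤ 1 * ‖∑ i ∈ s, b i • e i‖
    rw [one_mul, hnorm_sum, hnorm_sum]
    refine N_mono hφ hφ1 fun j => ?_
    rw [vec_apply, vec_apply]
    by_cases h : j ∈ s
    · simp only [h, if_true]; exact hab j
    · simp [h]
  · -- fundamental function
    intro n hn
    have hval : ∀ A : Finset ℕ, ‖∑ i ∈ A, e i‖ = Nφ φ (vec A (fun _ => 1)) := by
      intro A
      rw [show (∑ i ∈ A, e i) = ∑ i ∈ A, (fun _ => (1:ℝ)) i • e i by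
        refine Finset.sum_congr rfl fun i _ => ?_; rw [one_smul]]
      exact hnorm_sum A _
    have hub : ∀ r ∈ { r | ∃ A : Finset ℕ, A.card ≤ n ∧ r = ‖∑ i ∈ A, e i‖ }, r ≤ φ n := by
      rintro r ⟨A, hA, rfl⟩
      rw [hval]
      rcases A.eq_empty_or_nonempty with rfl | hA'
      · rw [show (vec ∅ (fun _ => (1:ℝ))) = 0 by rw [vec, Finset.sum_empty]]
        rw [N_zero hφ hφ1]
        have h1n : (1:ℝ) ≤ (n:ℝ) := by exact_mod_cast hn
        exact le_of_lt (hφ.1 _ h1n)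
      · rw [N_vec_one hφ hφ1 hA']
        have h1 : (1:ℝ) ≤ (A.card : ℝ) := by exact_mod_cast hA'.card_pos
        have h2 : (A.card : ℝ) ≤ (n : ℝ) := by exact_mod_cast hA
        exact hφ.2.1 _ _ h1 h2
    refine le_antisymm (csSup_le ⟨‖∑ i ∈ (∅ : Finset ℕ), e i‖, ∅, by simp, rfl⟩ hub) ?_
    refine le_csSup ⟨φ n, hub⟩ ⟨Finset.range n, le_of_eq (Finset.card_range n), ?_⟩
    show φ (n : ℝ) = ‖∑ i ∈ Finset.range n, e i‖
    rw [hval, N_vec_one hφ hφ1 (Finset.nonempty_range_iff.2 (by omega)), Finset.card_range]
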